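/- Let m ≥ 1 and set N = 2m, with coordinates (Z¹,…,Z^m,θ¹,…,θ^m) on ℂ^N; let e_i and v_i denote the constant coordinate vector fields ∂/∂Zⁱ and ∂/∂θⁱ. Let q ∈ ℂ^N, 0 < r < R, and let (ġ_k)_{k≥1} be holomorphic vector fields on an open neighborhood of the closed polydisc B_R(q) ⊆ ℂ^N. Fix an integer l ≥ 1 and suppose that for every i = 1,…,m the gauge recursion holds: Σ_{r'=1}^{l+1} (1/r'!) Σ_{k₁+⋯+k_{r'} = l+1, k_j ≥ 1} [ġ_{k₁},[…,[ġ_{k_{r'}}, v_i]…]] + Σ_{r'=1}^{l} (1/r'!) Σ_{k₁+⋯+k_{r'} = l, k_j ≥ 1} [ġ_{k₁},[…,[ġ_{k_{r'}}, e_i]…]] = 0. Then for every i = 1,…,m: ‖[v_i, ġ_{l+1}]‖_{B_r(q)} ≤ Σ_{s=2}^{l+1} (1/s!) (2Ns/(R−r))^s Σ_{k₁+⋯+k_s = l+1, k_j ≥ 1} Π_{j=1}^{s} ‖ġ_{k_j}‖_{B_R(q)} + Σ_{s=1}^{l} (1/s!) (2Ns/(R−r))^s Σ_{k₁+⋯+k_s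 = l, k_j ≥ 1} Π_{j=1}^{s} ‖ġ_{k_j}‖_{B_R(q)}. -/

import Mathlib

/-- Points of `ℂ^N = ℂ^{2m} = ℂ^m × ℂ^m` with coordinates `(Z, θ)`. -/
abbrev JVec (m : ℕ) := (Fin m → ℂ) × (Fin m → ℂ)

/-- Vector fields on (an open subset of) `ℂ^{2m}`. -/
abbrev JVF (m : ℕ) := JVec m → JVec m

/-- The Lie bracket `[V,W](z) = DW(z)(V(z)) − DV(z)(W(z))`. -/
noncomputable def lieB {m : ℕ} (V W : JVF m) : JVF m :=
  fun z => fderiv ℂ W z (V z) - fderiv ℂ V z (W z)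

/-- The constant coordinate vector field `e_i = ∂/∂Zⁱ`. -/
def eVF {m : ℕ} (i : Fin m) : JVF m := fun _ => (Pi.single i 1, 0)

/-- The constant coordinate vector field `v_i = ∂/∂θⁱ`. -/
def vVF {m : ℕ} (i : Fin m) : JVF m := fun _ => (0, Pi.single i 1)

/-- Nested Lie bracket `[L₁,[L₂,…,[L_m, X]…]]`. -/
noncomputable def nestedBracket {m : ℕ} (L : List (JVF m)) (X : JVF m) : JVF m :=
  L.foldr lieB X

/-- Compositions: tuples `(k₁,…,k_r)` of positive integers with `k₁+⋯+k_r = s`. -/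
def comps (r s : ℕ) : Finset (Fin r → ℕ) :=
  (Finset.Nat.antidiagonalTuple r s).filter fun t => ∀ j, 1 ≤ t j

/-- The left-hand side of the gauge recursion at order `l` in direction `i`. -/
noncomputable def gaugeRecLHS {m : ℕ} (g : ℕ → JVF m) (l : ℕ) (i : Fin m) : JVF m :=
  (∑ r ∈ Finset.Icc 1 (l + 1), ((r.factorial : ℂ)⁻¹) •
      ∑ t ∈ comps r (l + 1), nestedBracket (List.ofFn fun j => g (t j)) (vVF i))
  + (∑ r ∈ Finset.Icc 1 l, ((r.factorial : ℂ)⁻¹) •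
      ∑ t ∈ comps r l, nestedBracket (List.ofFn fun j => g (t j)) (eVF i))

/-- The closed polydisc of polyradius `r` centered at `q` in `ℂ^{2m}`. -/
def polyDisc {m : ℕ} (q : JVec m) (r : ℝ) : Set (JVec m) :=
  {w | (∀ j, ‖w.1 j - q.1 j‖ ≤ r) ∧ (∀ j, ‖w.2 j - q.2 j‖ ≤ r)}

/-- `‖V‖_K`, the sup over `K` of the max of the absolute values of the components. -/
noncomputable def vfNorm {m : ℕ} (V : JVF m) (K : Set (JVec m)) : ℝ :=
  ⨆ w ∈ K, ‖V w‖

open Metric Set Complex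
set_option maxHeartbeats 1000000
set_option synthInstance.maxHeartbeats 400000

variable {m : ℕ}

lemma polyDisc_mono (q : JVec m) {ρ ρ' : ℝ} (h : ρ ≤ ρ') : polyDisc q ρ ⊆ polyDisc q ρ' :=
  fun w hw => ⟨fun j => (hw.1 j).trans h, fun j => (hw.2 j).trans h⟩

lemma mem_polyDisc_self (q : JVec m) {ρ : ℝ} (h : 0 ≤ ρ) : q ∈ polyDisc q ρ :=
  ⟨fun j => by simpa using h, fun j => by simpa using h⟩

lemma mem_polyDisc_line {q z u : JVec m} {ρ d : ℝ} (hz : z ∈ polyDisc q ρ)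
    (hu : ‖u‖ ≤ 1) {t : ℂ} (ht : ‖t‖ ≤ d) : z + t • u ∈ polyDisc q (ρ + d) := by
  have hd : 0 ≤ d := le_trans (norm_nonneg t) ht
  have key : ∀ (a b c : Fin m → ℂ) (j : Fin m), ‖a j - b j‖ ≤ ρ → ‖c‖ ≤ 1 →
      ‖(a + t • c) j - b j‖ ≤ ρ + d := by
    intro a b c j ha hc
    have : (a + t • c) j - b j = (a j - b j) + t * c j := by
      simp [Pi.add_apply, Pi.smul_apply, smul_eq_mul]; ring
    rw [this]
    refine (norm_add_le _ _).trans ?_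
    have : ‖t * c j‖ ≤ d := by
      rw [norm_mul]
      calc ‖t‖ * ‖c j‖ ≤ d * 1 :=
        mul_le_mul ht (le_trans (norm_le_pi_norm c j) hc) (norm_nonneg _) hd
      _ = d := mul_one d
    linarith [ha]
  exact ⟨fun j => key z.1 q.1 u.1 j (hz.1 j) (le_trans (norm_fst_le u) hu),
         fun j => key z.2 q.2 u.2 j (hz.2 j) (le_trans (norm_snd_le u) hu)⟩

lemma polyDisc_isCompact (q : JVec m) (ρ : ℝ) : IsCompact (polyDisc q ρ) := by
  have : polyDisc q ρ =
      (Set.univ.pi fun j => closedBall (q.1 j) ρ) ×ˢ (Set.univ.pi fun j => closedBall (q.2 j) ρ) := by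
    ext w
    simp [polyDisc, Set.mem_pi, dist_eq_norm]
  rw [this]
  exact ((isCompact_univ_pi fun j => isCompact_closedBall _ _).prod
    (isCompact_univ_pi fun j => isCompact_closedBall _ _))

/-- One-variable Cauchy estimate for a directional derivative along a unit direction. -/
lemma dir_deriv_bound {Ω : Set (JVec m)} (hΩ : IsOpen Ω) {f : JVF m}
    (hf : DifferentiableOn ℂ f Ω) {z u : JVec m} {d M : ℝ} (hd : 0 < d)
    (hmem : ∀ t : ℂ, ‖t‖ ≤ d → z + t • u ∈ Ω)
    (hM : ∀ t : ℂ, ‖t‖ ≤ d → ‖f (z + t • u)‖ ≤ M) :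
    ‖fderiv ℂ f z u‖ ≤ M / d := by
  set φ : ℂ → JVec m := fun t => f (z + t • u) with hφ
  have hline : ∀ t : ℂ, HasDerivAt (fun s : ℂ => z + s • u) u t := by
    intro t
    simpa using ((hasDerivAt_id t).smul_const u).const_add z
  have hφdiff : ∀ t : ℂ, ‖t‖ ≤ d → DifferentiableAt ℂ φ t := by
    intro t ht
    exact ((hf.differentiableAt (hΩ.mem_nhds (hmem t ht))).comp t
      (hline t).differentiableAt)
  have hφ0 : HasDerivAt φ (fderiv ℂ f z u) 0 := by
    have h0 : z + (0 : ℂ) • u = z := by simp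
    have := ((hf.differentiableAt (hΩ.mem_nhds (by simpa [h0] using hmem 0 (by simpa using hd.le)))).hasFDerivAt).comp_hasDerivAt 0 (hline 0)
    exact (by simpa [h0] using this : HasDerivAt (f ∘ fun s : ℂ => z + s • u) _ 0)
  have hdc : DiffContOnCl ℂ φ (ball (0 : ℂ) d) := by
    apply DifferentiableOn.diffContOnCl
    rw [closure_ball (0 : ℂ) hd.ne']
    intro t ht
    exact (hφdiff t (by simpa [mem_closedBall_zero_iff] using ht)).differentiableWithinAt
  have := Complex.norm_deriv_le_of_forall_mem_sphere_norm_le hd hdc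
    (fun t ht => hM t (by simp [mem_sphere_iff_norm] at ht; simp [ht]))
  rwa [hφ0.deriv] at this

lemma norm_normalize {u : JVec m} (hu : u ≠ 0) : ‖((‖u‖ : ℂ))⁻¹ • u‖ = 1 := by
  rw [norm_smul, norm_inv, Complex.norm_real, Real.norm_eq_abs,
    _root_.abs_of_nonneg (norm_nonneg u)]
  field_simp [norm_ne_zero_iff.mpr hu]

/-- Cauchy estimate on polydiscs for directional derivatives, general direction. -/
lemma fderiv_bound_polydisc {Ω : Set (JVec m)} (hΩ : IsOpen Ω) {f : JVF m}
    (hf : DifferentiableOn ℂ f Ω) {q : JVec m} {ρ ρ' : ℝ} (hρ : ρ < ρ')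
    (hsub : polyDisc q ρ' ⊆ Ω) {M : ℝ} (hM : ∀ w ∈ polyDisc q ρ', ‖f w‖ ≤ M)
    {z : JVec m} (hz : z ∈ polyDisc q ρ) (u : JVec m) :
    ‖fderiv ℂ f z u‖ ≤ M * ‖u‖ / (ρ' - ρ) := by
  have hd : (0 : ℝ) < ρ' - ρ := by linarith
  have hM0 : 0 ≤ M := le_trans (norm_nonneg _) (hM z (polyDisc_mono q hρ.le hz))
  rcases eq_or_ne u 0 with rfl | hu
  · simp [hd.ne']
  · set u' : JVec m := ((‖u‖ : ℂ))⁻¹ • u with hu'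
    have hu'1 : ‖u'‖ = 1 := norm_normalize hu
    have hmem : ∀ t : ℂ, ‖t‖ ≤ ρ' - ρ → z + t • u' ∈ Ω := fun t ht => by
      have := mem_polyDisc_line hz hu'1.le ht
      rw [show ρ + (ρ' - ρ) = ρ' by ring] at this
      exact hsub this
    have key : ‖fderiv ℂ f z u'‖ ≤ M / (ρ' - ρ) := by
      refine dir_deriv_bound hΩ hf hd hmem (fun t ht => hM _ ?_)
      have := mem_polyDisc_line hz hu'1.le ht
      rwa [show ρ + (ρ' - ρ) = ρ' by ring] at this
    have hrec : u = (‖u‖ : ℂ) • u' := by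
      rw [hu', smul_inv_smul₀]
      simpa using norm_ne_zero_iff.mpr hu
    have hnn : ‖fderiv ℂ f z u‖ = ‖u‖ * ‖fderiv ℂ f z u'‖ := by
      conv_lhs => rw [hrec]
      rw [map_smul, norm_smul, Complex.norm_real, Real.norm_eq_abs,
        _root_.abs_of_nonneg (norm_nonneg u)]
    rw [hnn]
    calc ‖u‖ * ‖fderiv ℂ f z u'‖ ≤ ‖u‖ * (M / (ρ' - ρ)) := by gcongr
      _ = M * ‖u‖ / (ρ' - ρ) := by ring

/-- Cauchy estimate for the operator norm of the derivative, on metric closed balls. -/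
lemma fderiv_opNorm_bound {Ω : Set (JVec m)} (hΩ : IsOpen Ω) {f : JVF m}
    (hf : DifferentiableOn ℂ f Ω) {z : JVec m} {δ M : ℝ} (hδ : 0 < δ)
    (hmem : closedBall z δ ⊆ Ω) (hM : ∀ w ∈ closedBall z δ, ‖f w‖ ≤ M) :
    ‖fderiv ℂ f z‖ ≤ M / δ := by
  have hM0 : 0 ≤ M := le_trans (norm_nonneg _) (hM z (mem_closedBall_self hδ.le))
  refine ContinuousLinearMap.opNorm_le_bound _ (by positivity) fun u => ?_
  rcases eq_or_ne u 0 with rfl | hu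
  · simp
  · set u' : JVec m := ((‖u‖ : ℂ))⁻¹ • u with hu'
    have hu'1 : ‖u'‖ = 1 := norm_normalize hu
    have hline : ∀ t : ℂ, ‖t‖ ≤ δ → z + t • u' ∈ closedBall z δ := by
      intro t ht
      rw [mem_closedBall, dist_eq_norm, add_sub_cancel_left, norm_smul, hu'1, mul_one]
      exact ht
    have key : ‖fderiv ℂ f z u'‖ ≤ M / δ :=
      dir_deriv_bound hΩ hf hδ (fun t ht => hmem (hline t ht))
        (fun t ht => hM _ (hline t ht))
    have hrec : u = (‖u‖ : ℂ) • u' := by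
      rw [hu', smul_inv_smul₀]
      simpa using norm_ne_zero_iff.mpr hu
    have hnn : ‖fderiv ℂ f z u‖ = ‖u‖ * ‖fderiv ℂ f z u'‖ := by
      conv_lhs => rw [hrec]
      rw [map_smul, norm_smul, Complex.norm_real, Real.norm_eq_abs,
        _root_.abs_of_nonneg (norm_nonneg u)]
    rw [hnn]
    calc ‖u‖ * ‖fderiv ℂ f z u'‖ ≤ ‖u‖ * (M / δ) := by gcongr
      _ = M / δ * ‖u‖ := by ring

open MeasureTheory Real in
/-- The directional derivative of a holomorphic function on `ℂ^{2m}` depends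
holomorphically on the base point. -/
lemma fderiv_apply_differentiableAt {Ω : Set (JVec m)} (hΩ : IsOpen Ω) {f : JVF m}
    (hf : DifferentiableOn ℂ f Ω) {z₀ : JVec m} (hz₀ : z₀ ∈ Ω) (u : JVec m) :
    DifferentiableAt ℂ (fun z => fderiv ℂ f z u) z₀ := by
  obtain ⟨δ, hδpos, hδsub⟩ : ∃ δ > 0, closedBall z₀ δ ⊆ Ω :=
    (Metric.nhds_basis_closedBall.mem_iff).mp (hΩ.mem_nhds hz₀)
  obtain ⟨M, hMb⟩ := (isCompact_closedBall z₀ δ).exists_bound_of_continuousOn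
    (hf.continuousOn.mono hδsub)
  set K : ℝ := M / (δ / 2) with hK
  have hKb : ∀ w ∈ closedBall z₀ (δ / 2), ‖fderiv ℂ f w‖ ≤ K := by
    intro w hw
    refine fderiv_opNorm_bound hΩ hf (by linarith) ?_ ?_
    · refine subset_trans (closedBall_subset_closedBall' ?_) hδsub
      rw [mem_closedBall] at hw; linarith
    · intro v hv
      refine hMb v ?_
      have := closedBall_subset_closedBall' (show δ / 2 + dist w z₀ ≤ δ by
        rw [mem_closedBall] at hw; linarith)
      exact this hv
  set d' : ℝ := (δ / 4) / (‖u‖ + 1) with hd'def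
  have hd' : 0 < d' := by
    apply div_pos (by linarith)
    positivity
  have hcnorm : ∀ θ : ℝ, ‖circleMap 0 d' θ‖ = d' := by
    intro θ
    rw [norm_circleMap_zero, abs_of_pos hd']
  have hcne : ∀ θ : ℝ, circleMap 0 d' θ ≠ 0 := fun θ => circleMap_ne_center hd'.ne' (θ := θ)
  have hline : ∀ z ∈ closedBall z₀ (δ / 4), ∀ s : ℂ, ‖s‖ ≤ d' →
      z + s • u ∈ closedBall z₀ (δ / 2) := by
    intro z hz s hs
    rw [mem_closedBall] at hz ⊢
    calc dist (z + s • u) z₀ ≤ dist (z + s • u) z + dist z z₀ := dist_triangle _ _ _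
      _ ≤ ‖s • u‖ + δ / 4 := by
          rw [dist_eq_norm, add_sub_cancel_left]
          gcongr
      _ ≤ δ / 4 + δ / 4 := by
          have : ‖s • u‖ ≤ d' * (‖u‖ + 1) := by
            rw [norm_smul]
            have h1 : ‖u‖ ≤ ‖u‖ + 1 := by linarith
            exact mul_le_mul hs h1 (norm_nonneg u) hd'.le
          have : ‖s • u‖ ≤ δ / 4 := by
            rw [hd'def] at this
            calc ‖s • u‖ ≤ δ / 4 / (‖u‖ + 1) * (‖u‖ + 1) := this
              _ = δ / 4 := div_mul_cancel₀ _ (by positivity)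
          linarith
      _ = δ / 2 := by ring
  have hmemΩ : ∀ z ∈ closedBall z₀ (δ / 4), ∀ s : ℂ, ‖s‖ ≤ d' → z + s • u ∈ Ω := by
    intro z hz s hs
    exact hδsub ((closedBall_subset_closedBall (by linarith)) (hline z hz s hs))
  set μ : Measure ℝ := volume.restrict (Set.Ioc (0 : ℝ) (2 * π)) with hμ
  set Φ : JVec m → ℝ → JVec m := fun z θ =>
    deriv (circleMap 0 d') θ • ((circleMap 0 d' θ) ^ (-2 : ℤ) • f (z + circleMap 0 d' θ • u))
    with hΦ
  set Φ' : JVec m → ℝ → (JVec m →L[ℂ] JVec m) := fun z θ =>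
    deriv (circleMap 0 d') θ • ((circleMap 0 d' θ) ^ (-2 : ℤ) •
      fderiv ℂ f (z + circleMap 0 d' θ • u)) with hΦ'
  -- continuity facts
  have hc1 : Continuous fun θ : ℝ => deriv (circleMap 0 d') θ := by
    simp only [deriv_circleMap]
    exact (continuous_circleMap 0 d').mul continuous_const
  have hc2 : Continuous fun θ : ℝ => (circleMap 0 d' θ) ^ (-2 : ℤ) :=
    (continuous_circleMap 0 d').zpow₀ (-2) (fun θ => Or.inl (hcne θ))
  have hc3 : ∀ z ∈ closedBall z₀ (δ / 4), Continuous fun θ : ℝ => f (z + circleMap 0 d' θ • u) := by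
    intro z hz
    rw [continuous_iff_continuousAt]
    intro θ
    have hmem : z + circleMap 0 d' θ • u ∈ Ω := hmemΩ z hz _ (hcnorm θ).le
    have hinner : Continuous fun θ : ℝ => z + circleMap 0 d' θ • u :=
      continuous_const.add ((continuous_circleMap 0 d').smul continuous_const)
    exact ContinuousAt.comp ((hf.differentiableAt (hΩ.mem_nhds hmem)).continuousAt)
      hinner.continuousAt
  have hΦcont : ∀ z ∈ closedBall z₀ (δ / 4), Continuous (Φ z) := by
    intro z hz
    exact hc1.smul (hc2.smul (hc3 z hz))
  -- the parametric integral
  have key : HasFDerivAt (fun z => ∫ θ, Φ z θ ∂μ) (∫ θ, Φ' z₀ θ ∂μ) z₀ := by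
    apply hasFDerivAt_integral_of_dominated_of_fderiv_le (𝕜 := ℂ)
      (bound := fun _ => d' * (d' ^ (-2 : ℤ) * K)) (s := ball z₀ (δ / 4)) (Metric.ball_mem_nhds z₀ (by linarith))
    · filter_upwards [Metric.ball_mem_nhds z₀ (show (0:ℝ) < δ / 4 by linarith)] with x hx
      exact (hΦcont x (ball_subset_closedBall hx)).aestronglyMeasurable
    · exact (hΦcont z₀ (mem_closedBall_self (by linarith))).integrableOn_Ioc
    · apply AEStronglyMeasurable.smul hc1.aestronglyMeasurable
      apply AEStronglyMeasurable.smul hc2.aestronglyMeasurable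
      have hm : Measurable fun θ : ℝ => fderiv ℂ f (z₀ + circleMap 0 d' θ • u) :=
        (measurable_fderiv ℂ f).comp
          (continuous_const.add ((continuous_circleMap 0 d').smul continuous_const)).measurable
      exact hm.aestronglyMeasurable
    · refine Filter.Eventually.of_forall fun θ => fun x hx => ?_
      have hmem2 : x + circleMap 0 d' θ • u ∈ closedBall z₀ (δ / 2) :=
        hline x (ball_subset_closedBall hx) _ (hcnorm θ).le
      have hb : ‖fderiv ℂ f (x + circleMap 0 d' θ • u)‖ ≤ K := hKb _ hmem2
      have h1 : ‖deriv (circleMap 0 d') θ‖ = d' := by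
        rw [deriv_circleMap, norm_mul, Complex.norm_I, mul_one, hcnorm]
      have h2 : ‖(circleMap 0 d' θ) ^ (-2 : ℤ)‖ = d' ^ (-2 : ℤ) := by
        rw [norm_zpow, hcnorm]
      have hK0 : 0 ≤ K := le_trans (norm_nonneg _) hb
      rw [hΦ']
      simp only
      refine (norm_smul_le (deriv (circleMap 0 d') θ)
        ((circleMap 0 d' θ) ^ (-2 : ℤ) • fderiv ℂ f (x + circleMap 0 d' θ • u))).trans ?_
      have h3 : ‖(circleMap 0 d' θ) ^ (-2 : ℤ) • fderiv ℂ f (x + circleMap 0 d' θ • u)‖ ≤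
          ‖(circleMap 0 d' θ) ^ (-2 : ℤ)‖ * ‖fderiv ℂ f (x + circleMap 0 d' θ • u)‖ :=
        ContinuousLinearMap.opNorm_smul_le _ _
      refine (mul_le_mul_of_nonneg_left h3 (norm_nonneg _)).trans ?_
      rw [h1, h2]
      gcongr
    · exact integrableOn_const (s := Set.Ioc (0:ℝ) (2 * π)) (μ := volume) measure_Ioc_lt_top.ne enorm_ne_top
    · refine Filter.Eventually.of_forall fun θ => fun x hx => ?_
      have hmem : x + circleMap 0 d' θ • u ∈ Ω :=
        hmemΩ x (ball_subset_closedBall hx) _ (hcnorm θ).le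
      have hfd : HasFDerivAt f (fderiv ℂ f (x + circleMap 0 d' θ • u))
          (x + circleMap 0 d' θ • u) :=
        (hf.differentiableAt (hΩ.mem_nhds hmem)).hasFDerivAt
      have htrans : HasFDerivAt (fun z : JVec m => z + circleMap 0 d' θ • u)
          (ContinuousLinearMap.id ℂ (JVec m)) x := (hasFDerivAt_id x).add_const _
      have := (hfd.comp x htrans).const_smul ((circleMap 0 d' θ) ^ (-2 : ℤ))
      have := this.const_smul (deriv (circleMap 0 d') θ)
      rw [ContinuousLinearMap.comp_id] at this
      exact this
  -- identification with the directional derivative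
  have hEq : ∀ z ∈ ball z₀ (δ / 4),
      fderiv ℂ f z u = (2 * π * I : ℂ)⁻¹ • ∫ θ, Φ z θ ∂μ := by
    intro z hz
    have hzc : z ∈ closedBall z₀ (δ / 4) := ball_subset_closedBall hz
    set φ : ℂ → JVec m := fun s => f (z + s • u) with hφdef
    have hlineD : ∀ t : ℂ, HasDerivAt (fun s : ℂ => z + s • u) u t := by
      intro t
      simpa using ((hasDerivAt_id t).smul_const u).const_add z
    have hdc : DiffContOnCl ℂ φ (ball (0 : ℂ) d') := by
      apply DifferentiableOn.diffContOnCl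
      rw [closure_ball (0 : ℂ) hd'.ne']
      intro t ht
      rw [mem_closedBall_zero_iff] at ht
      exact ((hf.differentiableAt (hΩ.mem_nhds (hmemΩ z hzc t ht))).comp t
        (hlineD t).differentiableAt).differentiableWithinAt
    have hder : deriv φ 0 = fderiv ℂ f z u := by
      have h0 : z + (0 : ℂ) • u = z := by simp
      have := ((hf.differentiableAt (hΩ.mem_nhds (by
        simpa [h0] using hmemΩ z hzc 0 (by simpa using hd'.le)))).hasFDerivAt).comp_hasDerivAt
        0 (hlineD 0)
      rw [h0] at this
      exact this.deriv
    have hint : deriv φ 0 = (2 * π * I : ℂ)⁻¹ • ∮ s in C(0, d'), (s - 0) ^ (-2 : ℤ) • φ s :=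
      by
        have h := hdc.deriv_eq_smul_circleIntegral hd'
        have e : ∀ s : ℂ, (s - 0) ^ (-2 : ℤ) • φ s = (1 / (s - 0) ^ 2) • φ s := by
          intro s; rw [zpow_neg, zpow_two, ← sq, one_div]
        simp_rw [e, h, smul_smul, inv_mul_cancel₀ two_pi_I_ne_zero, one_smul]
    rw [← hder, hint]
    congr 1
    simp only [sub_zero]
    rw [circleIntegral, intervalIntegral.integral_of_le (by positivity : (0:ℝ) ≤ 2 * π), hμ]
  have hI : DifferentiableAt ℂ (fun z => (2 * π * I : ℂ)⁻¹ • ∫ θ, Φ z θ ∂μ) z₀ :=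
    by have := key.differentiableAt.const_smul (2 * π * I : ℂ)⁻¹; exact this
  refine hI.congr_of_eventuallyEq ?_
  filter_upwards [Metric.ball_mem_nhds z₀ (show (0:ℝ) < δ / 4 by linarith)] with z hz
  exact hEq z hz

/-- Basis vectors of `JVec m`, indexed by `Fin m ⊕ Fin m`. -/
def bVec (k : Fin m ⊕ Fin m) : JVec m :=
  Sum.elim (fun i => ((Pi.single i 1 : Fin m → ℂ), 0)) (fun i => (0, (Pi.single i 1 : Fin m → ℂ))) k

/-- Coordinate functionals of `JVec m`. -/
noncomputable def coordL (k : Fin m ⊕ Fin m) : JVec m →L[ℂ] ℂ :=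
  Sum.elim
    (fun i => (ContinuousLinearMap.proj i).comp (ContinuousLinearMap.fst ℂ (Fin m → ℂ) (Fin m → ℂ)))
    (fun i => (ContinuousLinearMap.proj i).comp (ContinuousLinearMap.snd ℂ (Fin m → ℂ) (Fin m → ℂ)))
    k

lemma sum_coord_smul (w : JVec m) : ∑ k : Fin m ⊕ Fin m, coordL k w • bVec k = w := by
  rw [Fintype.sum_sum_type]
  have h1 : ∀ x : Fin m → ℂ, ∑ i : Fin m, x i • (Pi.single i 1 : Fin m → ℂ) = x := by
    intro x
    funext j
    simp only [Finset.sum_apply, Pi.smul_apply, Pi.single_apply, smul_eq_mul, mul_ite, mul_one,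
      mul_zero]
    simp
  apply Prod.ext
  · simp only [coordL, bVec, Sum.elim_inl, Sum.elim_inr, Prod.fst_add, Prod.fst_sum]
    simp only [Prod.smul_mk, Prod.fst_add, smul_zero]
    simp only [ContinuousLinearMap.comp_apply, ContinuousLinearMap.coe_fst',
      ContinuousLinearMap.proj_apply]
    simp [h1 w.1]
  · simp only [coordL, bVec, Sum.elim_inl, Sum.elim_inr]
    rw [Prod.snd_add, Prod.snd_sum, Prod.snd_sum]
    simp only [Prod.smul_mk, smul_zero]
    simp [ContinuousLinearMap.comp_apply, h1 w.2]

/-- The derivative of a holomorphic map on an open subset of `ℂ^{2m}` is holomorphic. -/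
lemma fderiv_differentiableOn {Ω : Set (JVec m)} (hΩ : IsOpen Ω) {f : JVF m}
    (hf : DifferentiableOn ℂ f Ω) : DifferentiableOn ℂ (fderiv ℂ f) Ω := by
  intro z₀ hz₀
  suffices h : DifferentiableAt ℂ (fderiv ℂ f) z₀ from h.differentiableWithinAt
  have hrep : ∀ z ∈ Ω, fderiv ℂ f z =
      ∑ k : Fin m ⊕ Fin m, (coordL k).smulRight (fderiv ℂ f z (bVec k)) := by
    intro z hz
    refine ContinuousLinearMap.ext fun w => ?_
    rw [ContinuousLinearMap.sum_apply]
    simp only [ContinuousLinearMap.smulRight_apply]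
    calc fderiv ℂ f z w = fderiv ℂ f z (∑ k : Fin m ⊕ Fin m, coordL k w • bVec k) := by
          rw [sum_coord_smul]
      _ = ∑ k : Fin m ⊕ Fin m, coordL k w • fderiv ℂ f z (bVec k) := by
          rw [map_sum]
          simp only [map_smul]
  have hdiff : DifferentiableAt ℂ (fun z =>
      ∑ k : Fin m ⊕ Fin m, (coordL k).smulRight (fderiv ℂ f z (bVec k))) z₀ := by
    apply DifferentiableAt.fun_sum
    intro k _
    have : DifferentiableAt ℂ (fun z => (ContinuousLinearMap.smulRightL ℂ (JVec m) (JVec m)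
        (coordL k)) (fderiv ℂ f z (bVec k))) z₀ :=
      (ContinuousLinearMap.smulRightL ℂ (JVec m) (JVec m) (coordL k)).differentiableAt.comp z₀
        (fderiv_apply_differentiableAt hΩ hf hz₀ (bVec k))
    exact this
  refine hdiff.congr_of_eventuallyEq ?_
  filter_upwards [hΩ.mem_nhds hz₀] with z hz
  exact hrep z hz

/-- The Lie bracket of holomorphic vector fields is holomorphic. -/
lemma lieB_differentiableOn {Ω : Set (JVec m)} (hΩ : IsOpen Ω) {V W : JVF m}
    (hV : DifferentiableOn ℂ V Ω) (hW : DifferentiableOn ℂ W Ω) :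
    DifferentiableOn ℂ (lieB V W) Ω := by
  have h1 : DifferentiableOn ℂ (fun z => fderiv ℂ W z (V z)) Ω :=
    (fderiv_differentiableOn hΩ hW).clm_apply hV
  have h2 : DifferentiableOn ℂ (fun z => fderiv ℂ V z (W z)) Ω :=
    (fderiv_differentiableOn hΩ hV).clm_apply hW
  exact h1.sub h2

lemma nestedBracket_nil {X : JVF m} : nestedBracket [] X = X := rfl

lemma nestedBracket_cons {a : JVF m} {L : List (JVF m)} {X : JVF m} :
    nestedBracket (a :: L) X = lieB a (nestedBracket L X) := rfl

lemma nestedBracket_diffOn {Ω : Set (JVec m)} (hΩ : IsOpen Ω) {X : JVF m}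
    (hX : DifferentiableOn ℂ X Ω) :
    ∀ L : List (JVF m), (∀ V ∈ L, DifferentiableOn ℂ V Ω) →
      DifferentiableOn ℂ (nestedBracket L X) Ω
  | [], _ => hX
  | (V :: L), h => by
    rw [nestedBracket_cons]
    exact lieB_differentiableOn hΩ (h V List.mem_cons_self)
      (nestedBracket_diffOn hΩ hX L fun W hW => h W (List.mem_cons_of_mem _ hW))

/-- Main nested-commutator estimate on shrinking polydiscs. -/
lemma nestedBracket_bound {Ω : Set (JVec m)} (hΩ : IsOpen Ω) {q : JVec m} {R : ℝ}
    (hsub : polyDisc q R ⊆ Ω) {X : JVF m} (hX : DifferentiableOn ℂ X Ω) {C : ℝ}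
    (hC : ∀ w ∈ polyDisc q R, ‖X w‖ ≤ C) :
    ∀ (n : ℕ) (V : Fin n → JVF m) (M : Fin n → ℝ),
      (∀ j, DifferentiableOn ℂ (V j) Ω) → (∀ j, ∀ w ∈ polyDisc q R, ‖V j w‖ ≤ M j) →
      ∀ ρ : ℝ, ρ ≤ R → (n ≠ 0 → ρ < R) → ∀ z ∈ polyDisc q ρ,
        ‖nestedBracket (List.ofFn V) X z‖ ≤ (2 * (n : ℝ) / (R - ρ)) ^ n * (∏ j, M j) * C := by
  intro n
  induction n with
  | zero =>
    intro V M _ _ ρ hρR _ z hz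
    simp only [List.ofFn_zero, nestedBracket_nil, Nat.cast_zero, pow_zero, Finset.univ_eq_empty,
      Finset.prod_empty, one_mul, mul_one, Fin.prod_univ_zero]
    exact hC z (polyDisc_mono q hρR hz)
  | succ n ih =>
    intro V M hV hM ρ hρR hρlt z hz
    have hρR' : ρ < R := hρlt (Nat.succ_ne_zero n)
    have hRρ : (0:ℝ) < R - ρ := by linarith
    set d : ℝ := (R - ρ) / ((n : ℝ) + 1) with hd
    have hdpos : 0 < d := by positivity
    set ρ₁ : ℝ := ρ + d with hρ₁
    have hρ₁R : ρ₁ ≤ R := by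
      have : d ≤ R - ρ := by
        rw [hd]
        apply div_le_self hRρ.le
        simp
      simp only [hρ₁]; linarith
    have hρ₁lt : n ≠ 0 → ρ₁ < R := by
      intro hn
      have hn1 : (1:ℝ) < (n : ℝ) + 1 := by
        have : 1 ≤ (n:ℝ) := by exact_mod_cast Nat.one_le_iff_ne_zero.mpr hn
        linarith
      have : d < R - ρ := by
        rw [hd]
        exact div_lt_self hRρ hn1
      simp only [hρ₁]; linarith
    set W : JVF m := nestedBracket (List.ofFn fun j : Fin n => V j.succ) X with hW
    set MW : ℝ := (2 * (n : ℝ) / (R - ρ₁)) ^ n * (∏ j : Fin n, M j.succ) * C with hMW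
    have hWd : DifferentiableOn ℂ W Ω :=
      nestedBracket_diffOn hΩ hX _ (by
        intro Y hY
        obtain ⟨j, rfl⟩ := List.mem_ofFn.mp hY
        exact hV _)
    have hWb : ∀ w ∈ polyDisc q ρ₁, ‖W w‖ ≤ MW :=
      fun w hw => ih (fun j => V j.succ) (fun j => M j.succ) (fun j => hV _) (fun j => hM _)
        ρ₁ hρ₁R hρ₁lt w hw
    have hsub₁ : polyDisc q ρ₁ ⊆ Ω := subset_trans (polyDisc_mono q hρ₁R) hsub
    have hzρ₁ : z ∈ polyDisc q ρ₁ := polyDisc_mono q (by simp only [hρ₁]; linarith) hz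
    have hzR : z ∈ polyDisc q R := polyDisc_mono q hρR hz
    have hMW0 : (0:ℝ) ≤ MW := le_trans (norm_nonneg _) (hWb z hzρ₁)
    have hM00 : (0:ℝ) ≤ M 0 := le_trans (norm_nonneg _) (hM 0 z hzR)
    have hρρ₁ : ρ < ρ₁ := by simp only [hρ₁]; linarith
    have h1 : ‖fderiv ℂ W z (V 0 z)‖ ≤ MW * M 0 / (ρ₁ - ρ) := by
      refine (fderiv_bound_polydisc hΩ hWd hρρ₁ hsub₁ hWb hz (V 0 z)).trans ?_
      gcongr <;> linarith [hM 0 z hzR]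
    have h2 : ‖fderiv ℂ (V 0) z (W z)‖ ≤ M 0 * MW / (ρ₁ - ρ) := by
      refine (fderiv_bound_polydisc hΩ (hV 0) hρρ₁ hsub₁
        (fun w hw => hM 0 w (polyDisc_mono q hρ₁R hw)) hz (W z)).trans ?_
      gcongr <;> linarith [hWb z hzρ₁]
    have hkey : ‖nestedBracket (List.ofFn V) X z‖ ≤ 2 * (M 0 * MW) / (ρ₁ - ρ) := by
      rw [List.ofFn_succ, nestedBracket_cons]
      calc ‖lieB (V 0) (nestedBracket (List.ofFn fun j : Fin n => V j.succ) X) z‖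
          = ‖fderiv ℂ W z (V 0 z) - fderiv ℂ (V 0) z (W z)‖ := rfl
        _ ≤ ‖fderiv ℂ W z (V 0 z)‖ + ‖fderiv ℂ (V 0) z (W z)‖ := norm_sub_le _ _
        _ ≤ MW * M 0 / (ρ₁ - ρ) + M 0 * MW / (ρ₁ - ρ) := add_le_add h1 h2
        _ = 2 * (M 0 * MW) / (ρ₁ - ρ) := by ring
    refine hkey.trans ?_
    have hpow : (2 * (n : ℝ) / (R - ρ₁)) ^ n = (2 * ((n : ℝ) + 1) / (R - ρ)) ^ n := by
      rcases Nat.eq_zero_or_pos n with h0 | hpos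
      · subst h0; simp
      · have hn0 : (n : ℝ) ≠ 0 := Nat.cast_ne_zero.mpr hpos.ne'
        have hR₁ : R - ρ₁ = (R - ρ) * (n : ℝ) / ((n : ℝ) + 1) := by
          simp only [hρ₁, hd]
          field_simp
          ring
        congr 1
        rw [hR₁]
        field_simp
    have hdiff : ρ₁ - ρ = d := by simp only [hρ₁]; ring
    have hne : R - ρ ≠ 0 := hRρ.ne'
    have hn1 : ((n:ℝ) + 1) ≠ 0 := by positivity
    refine le_of_eq ?_
    rw [hdiff, hd, hMW, hpow, Fin.prod_univ_succ]
    push_cast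
    generalize R - ρ = D at hne ⊢
    field_simp
    have hD : D * D⁻¹ = 1 := mul_inv_cancel₀ hne
    linear_combination (-(M 0 * (n:ℝ) * (∏ j : Fin n, M j.succ) * C * ((n:ℝ) * D⁻¹ * 2 + D⁻¹ * 2) ^ n * 2 +
      M 0 * (∏ j : Fin n, M j.succ) * C * ((n:ℝ) * D⁻¹ * 2 + D⁻¹ * 2) ^ n * 2)) * hD

lemma vfNorm_le {V : JVF m} {K : Set (JVec m)} {M : ℝ} (h : ∀ w ∈ K, ‖V w‖ ≤ M) (h0 : 0 ≤ M) :
    vfNorm V K ≤ M :=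
  Real.iSup_le (fun w => Real.iSup_le (fun hw => h w hw) h0) h0

lemma le_vfNorm {V : JVF m} {K : Set (JVec m)} {M : ℝ} (h : ∀ w ∈ K, ‖V w‖ ≤ M)
    {w₀ : JVec m} (hw : w₀ ∈ K) : ‖V w₀‖ ≤ vfNorm V K := by
  have hM0 : 0 ≤ M := le_trans (norm_nonneg _) (h w₀ hw)
  have hb : BddAbove (Set.range fun w => ⨆ _ : w ∈ K, ‖V w‖) := by
    refine ⟨M, ?_⟩
    rintro x ⟨w, rfl⟩
    show (⨆ _ : w ∈ K, ‖V w‖) ≤ M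
    by_cases hwK : w ∈ K
    · rw [(ciSup_pos hwK : (⨆ _ : w ∈ K, ‖V w‖) = ‖V w‖)]; exact h w hwK
    · haveI : IsEmpty (w ∈ K) := ⟨fun h' => hwK h'⟩
      rw [Real.iSup_of_isEmpty]
      exact hM0
  calc ‖V w₀‖ = ⨆ _ : w₀ ∈ K, ‖V w₀‖ :=
        ((ciSup_pos hw : (⨆ _ : w₀ ∈ K, ‖V w₀‖) = ‖V w₀‖)).symm
    _ ≤ vfNorm V K := le_ciSup hb w₀

lemma one_le_of_mem_comps {s n : ℕ} {t : Fin s → ℕ} (ht : t ∈ comps s n) (j : Fin s) :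
    1 ≤ t j := (Finset.mem_filter.mp ht).2 j

lemma comps_one {n : ℕ} (hn : 1 ≤ n) : comps 1 n = {fun _ => n} := by
  ext t
  simp only [comps, Finset.mem_filter, Finset.Nat.mem_antidiagonalTuple, Finset.mem_singleton]
  constructor
  · rintro ⟨hsum, hpos⟩
    funext j
    have hj : j = 0 := Subsingleton.elim j 0
    subst hj
    rw [← hsum, Fin.sum_univ_one]
  · rintro rfl
    exact ⟨by rw [Fin.sum_univ_one], fun j => hn⟩

lemma Icc_split (l : ℕ) : Finset.Icc 1 (l + 1) = insert 1 (Finset.Icc 2 (l + 1)) := by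
  ext x
  simp only [Finset.mem_Icc, Finset.mem_insert]
  omega

lemma norm_vVF_le (i : Fin m) (w : JVec m) : ‖vVF i w‖ ≤ 1 := by
  rw [vVF, Prod.norm_def]
  simp [Pi.norm_single]

lemma norm_eVF_le (i : Fin m) (w : JVec m) : ‖eVF i w‖ ≤ 1 := by
  rw [eVF, Prod.norm_def]
  simp [Pi.norm_single]

lemma vVF_diffOn {Ω : Set (JVec m)} (i : Fin m) : DifferentiableOn ℂ (vVF i) Ω :=
  differentiableOn_const _

lemma eVF_diffOn {Ω : Set (JVec m)} (i : Fin m) : DifferentiableOn ℂ (eVF i) Ω :=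
  differentiableOn_const _

lemma lieB_vVF_skew (G : JVF m) (i : Fin m) (z : JVec m) :
    lieB G (vVF i) z = -(lieB (vVF i) G z) := by
  simp [lieB, vVF, fderiv_const]

lemma ofFn_one_const (a : JVF m) : List.ofFn (fun _ : Fin 1 => a) = [a] := by
  simp [List.ofFn_succ]


/-- Key estimate: if the gauge recursion holds at a fixed order `l ≥ 1`, then
`‖[v_i, ġ_{l+1}]‖_{B_r} ≤ Σ_{s=2}^{l+1} (1/s!)(2Ns/(R−r))^s Σ_{k₁+⋯+k_s=l+1} Π ‖ġ_{k_j}‖_{B_R}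
 + Σ_{s=1}^{l} (1/s!)(2Ns/(R−r))^s Σ_{k₁+⋯+k_s=l} Π ‖ġ_{k_j}‖_{B_R}` with `N = 2m`. -/
theorem stmt_4 (m : ℕ) (hm : 1 ≤ m) (q : JVec m) (r R : ℝ) (hr : 0 < r) (hrR : r < R)
    (Ω : Set (JVec m)) (hΩ : IsOpen Ω) (hsub : polyDisc q R ⊆ Ω)
    (g : ℕ → JVF m) (hg : ∀ k, 1 ≤ k → DifferentiableOn ℂ (g k) Ω)
    (l : ℕ) (hl : 1 ≤ l)
    (hrec : ∀ i : Fin m, ∀ z ∈ Ω, gaugeRecLHS g l i z = 0) :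
    ∀ i : Fin m,
      vfNorm (lieB (vVF i) (g (l + 1))) (polyDisc q r)
        ≤ (∑ s ∈ Finset.Icc 2 (l + 1), (1 / (s.factorial : ℝ)) *
              ((2 * (2 * (m : ℝ)) * (s : ℝ)) / (R - r)) ^ s *
              ∑ t ∈ comps s (l + 1), ∏ j, vfNorm (g (t j)) (polyDisc q R))
          + (∑ s ∈ Finset.Icc 1 l, (1 / (s.factorial : ℝ)) *
              ((2 * (2 * (m : ℝ)) * (s : ℝ)) / (R - r)) ^ s *
              ∑ t ∈ comps s l, ∏ j, vfNorm (g (t j)) (polyDisc q R)) := by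
  intro i
  have hR0 : (0:ℝ) ≤ R := by linarith
  have hRr : (0:ℝ) < R - r := by linarith
  have hbound : ∀ k, 1 ≤ k → ∀ w ∈ polyDisc q R, ‖g k w‖ ≤ vfNorm (g k) (polyDisc q R) := by
    intro k hk
    obtain ⟨M, hM⟩ := (polyDisc_isCompact q R).exists_bound_of_continuousOn
      ((hg k hk).continuousOn.mono hsub)
    exact fun w hw => le_vfNorm hM hw
  have hvf0 : ∀ k, 1 ≤ k → 0 ≤ vfNorm (g k) (polyDisc q R) := fun k hk =>
    le_trans (norm_nonneg _) (hbound k hk q (mem_polyDisc_self q hR0))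
  -- per-term nested-bracket estimate
  have hterm : ∀ (s n' : ℕ), 1 ≤ s → ∀ t ∈ comps s n', (∀ j, 1 ≤ t j) →
      ∀ X : JVF m, DifferentiableOn ℂ X Ω → (∀ w ∈ polyDisc q R, ‖X w‖ ≤ 1) →
      ∀ z ∈ polyDisc q r,
      ‖nestedBracket (List.ofFn fun j => g (t j)) X z‖ ≤
        ((2 * (2 * (m:ℝ)) * (s:ℝ)) / (R - r)) ^ s *
          ∏ j, vfNorm (g (t j)) (polyDisc q R) := by
    intro s n' hs t ht htj X hX hXb z hz
    have h1 := nestedBracket_bound hΩ hsub hX hXb s (fun j => g (t j))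
      (fun j => vfNorm (g (t j)) (polyDisc q R)) (fun j => hg _ (htj j))
      (fun j => hbound _ (htj j)) r hrR.le (fun _ => hrR) z hz
    rw [mul_one] at h1
    refine h1.trans ?_
    have hprod0 : 0 ≤ ∏ j, vfNorm (g (t j)) (polyDisc q R) :=
      Finset.prod_nonneg fun j _ => hvf0 _ (htj j)
    refine mul_le_mul_of_nonneg_right (pow_le_pow_left₀ ?_ ?_ s) hprod0
    · exact div_nonneg (by positivity) hRr.le
    · have hm' : (1:ℝ) ≤ 2 * (m:ℝ) := by
        have : (1:ℝ) ≤ (m:ℝ) := by exact_mod_cast hm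
        linarith
      have hnum : 2 * (s:ℝ) ≤ 2 * (2 * (m:ℝ)) * (s:ℝ) := by
        have hs0 : (0:ℝ) ≤ (s:ℝ) := Nat.cast_nonneg s
        nlinarith
      exact (div_le_div_iff_of_pos_right hRr).mpr hnum
  -- pointwise bound
  have hpt : ∀ z ∈ polyDisc q r, ‖lieB (vVF i) (g (l + 1)) z‖ ≤
      (∑ s ∈ Finset.Icc 2 (l + 1), (1 / (s.factorial : ℝ)) *
          ((2 * (2 * (m : ℝ)) * (s : ℝ)) / (R - r)) ^ s *
          ∑ t ∈ comps s (l + 1), ∏ j, vfNorm (g (t j)) (polyDisc q R))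
        + (∑ s ∈ Finset.Icc 1 l, (1 / (s.factorial : ℝ)) *
          ((2 * (2 * (m : ℝ)) * (s : ℝ)) / (R - r)) ^ s *
          ∑ t ∈ comps s l, ∏ j, vfNorm (g (t j)) (polyDisc q R)) := by
    intro z hzr
    have hzΩ : z ∈ Ω := hsub (polyDisc_mono q hrR.le hzr)
    have h0 := hrec i z hzΩ
    rw [gaugeRecLHS] at h0
    simp only [Pi.add_apply, Finset.sum_apply, Pi.smul_apply] at h0
    rw [Icc_split l, Finset.sum_insert (by simp)] at h0
    rw [comps_one (by omega : 1 ≤ l + 1), Finset.sum_singleton] at h0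
    simp only [Nat.factorial_one, Nat.cast_one, inv_one, one_smul, ofFn_one_const,
      nestedBracket_cons, nestedBracket_nil] at h0
    rw [lieB_vVF_skew] at h0
    rw [add_assoc, neg_add_eq_zero] at h0
    rw [h0]
    refine (norm_add_le _ _).trans (add_le_add ?_ ?_)
    · refine (norm_sum_le _ _).trans ?_
      refine Finset.sum_le_sum fun s hs => ?_
      have hs1 : 1 ≤ s := by have := Finset.mem_Icc.mp hs; omega
      rw [norm_smul]
      have hfac : ‖((s.factorial : ℂ))⁻¹‖ = 1 / (s.factorial : ℝ) := by
        rw [norm_inv, Complex.norm_natCast, one_div]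
      rw [hfac]
      have hin : ‖∑ t ∈ comps s (l+1), nestedBracket (List.ofFn fun j => g (t j)) (vVF i) z‖ ≤
          ((2 * (2 * (m:ℝ)) * (s:ℝ)) / (R - r)) ^ s *
            ∑ t ∈ comps s (l+1), ∏ j, vfNorm (g (t j)) (polyDisc q R) := by
        refine (norm_sum_le _ _).trans ?_
        rw [Finset.mul_sum]
        refine Finset.sum_le_sum fun t ht => ?_
        exact hterm s (l+1) hs1 t ht (one_le_of_mem_comps ht) (vVF i) (vVF_diffOn i)
          (fun w _ => norm_vVF_le i w) z hzr
      calc (1/(s.factorial:ℝ)) * ‖∑ t ∈ comps s (l+1),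
            nestedBracket (List.ofFn fun j => g (t j)) (vVF i) z‖
          ≤ (1/(s.factorial:ℝ)) * (((2 * (2 * (m:ℝ)) * (s:ℝ)) / (R - r)) ^ s *
            ∑ t ∈ comps s (l+1), ∏ j, vfNorm (g (t j)) (polyDisc q R)) :=
            mul_le_mul_of_nonneg_left hin (by positivity)
        _ = (1/(s.factorial:ℝ)) * ((2 * (2 * (m:ℝ)) * (s:ℝ)) / (R - r)) ^ s *
            ∑ t ∈ comps s (l+1), ∏ j, vfNorm (g (t j)) (polyDisc q R) := by ring
    · refine (norm_sum_le _ _).trans ?_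
      refine Finset.sum_le_sum fun s hs => ?_
      have hs1 : 1 ≤ s := by have := Finset.mem_Icc.mp hs; omega
      rw [norm_smul]
      have hfac : ‖((s.factorial : ℂ))⁻¹‖ = 1 / (s.factorial : ℝ) := by
        rw [norm_inv, Complex.norm_natCast, one_div]
      rw [hfac]
      have hin : ‖∑ t ∈ comps s l, nestedBracket (List.ofFn fun j => g (t j)) (eVF i) z‖ ≤
          ((2 * (2 * (m:ℝ)) * (s:ℝ)) / (R - r)) ^ s *
            ∑ t ∈ comps s l, ∏ j, vfNorm (g (t j)) (polyDisc q R) := by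
        refine (norm_sum_le _ _).trans ?_
        rw [Finset.mul_sum]
        refine Finset.sum_le_sum fun t ht => ?_
        exact hterm s l hs1 t ht (one_le_of_mem_comps ht) (eVF i) (eVF_diffOn i)
          (fun w _ => norm_eVF_le i w) z hzr
      calc (1/(s.factorial:ℝ)) * ‖∑ t ∈ comps s l,
            nestedBracket (List.ofFn fun j => g (t j)) (eVF i) z‖
          ≤ (1/(s.factorial:ℝ)) * (((2 * (2 * (m:ℝ)) * (s:ℝ)) / (R - r)) ^ s *
            ∑ t ∈ comps s l, ∏ j, vfNorm (g (t j)) (polyDisc q R)) :=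
            mul_le_mul_of_nonneg_left hin (by positivity)
        _ = (1/(s.factorial:ℝ)) * ((2 * (2 * (m:ℝ)) * (s:ℝ)) / (R - r)) ^ s *
            ∑ t ∈ comps s l, ∏ j, vfNorm (g (t j)) (polyDisc q R) := by ring
  refine vfNorm_le hpt ?_
  have hnn : ∀ (S : Finset ℕ) (n' : ℕ), 0 ≤ ∑ s ∈ S, (1 / (s.factorial : ℝ)) *
      ((2 * (2 * (m : ℝ)) * (s : ℝ)) / (R - r)) ^ s *
      ∑ t ∈ comps s n', ∏ j, vfNorm (g (t j)) (polyDisc q R) := by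
    intro S n'
    refine Finset.sum_nonneg fun s hs => ?_
    refine mul_nonneg (mul_nonneg (by positivity)
      (pow_nonneg (div_nonneg (by positivity) hRr.le) s)) ?_
    refine Finset.sum_nonneg fun t ht => Finset.prod_nonneg fun j _ => ?_
    exact hvf0 _ (one_le_of_mem_comps ht j)
  exact add_nonneg (hnn _ _) (hnn _ _)
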